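/- Let M be a module whose poset of direct summands has deviation (in the sense of Krull dimension of posets). Then every direct sum decomposition of M is finite (has only finitely many nonzero summands). -/

import Mathlib

universe v

/-- `DevLE S o` says the subposet `S` of `P` has deviation at most `o` (where deviation
`-1`, i.e. `S` discrete, is allowed): for every descending chain in `S`, all but finitely
many of the consecutive intervals are discrete or have deviation `< o`. -/
def DevLE {P : Type*} [Preorder P] (S : Set P) (o : Ordinal.{v}) : Prop :=
  ∀ f : ℕ → P, (∀ n, f n ∈ S) → (∀ n, f (n + 1) ≤ f n) →
    ∃ N : ℕ, ∀ n ≥ N,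
      (∀ a ∈ S ∩ Set.Icc (f (n + 1)) (f n), ∀ b ∈ S ∩ Set.Icc (f (n + 1)) (f n),
        a ≤ b → a = b) ∨
      ∃ o' : Ordinal.{v}, ∃ _ : o' < o, DevLE (S ∩ Set.Icc (f (n + 1)) (f n)) o'
termination_by o

/-- `N` is a direct summand of the module `M`. -/
def IsSummand {R : Type*} [Ring R] {M : Type*} [AddCommGroup M] [Module R M]
    (N : Submodule R M) : Prop :=
  ∃ N', IsCompl N N'

section Aux

variable {R : Type*} [Ring R] {M : Type*} [AddCommGroup M] [Module R M]

/-- From membership in a big sup, extract a finitely supported family of components. -/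
lemma exists_finsupp_of_mem_sSup {A : Set (Submodule R M)} {x : M} (hx : x ∈ sSup A) :
    ∃ f : Submodule R M →₀ M, (∀ N, f N ∈ N) ∧ (∀ N, N ∉ A → f N = 0) ∧
      (f.sum fun _ m => m) = x := by
  rw [sSup_eq_iSup] at hx
  obtain ⟨f, hf, hsum⟩ := (Submodule.mem_iSup_iff_exists_finsupp
    (fun N : Submodule R M => ⨆ _ : N ∈ A, N) x).mp hx
  refine ⟨f, fun N => ?_, fun N hN => ?_, hsum⟩
  · by_cases h : N ∈ A
    · have := hf N; rwa [iSup_pos h] at this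
    · have := hf N; rw [iSup_neg h] at this
      simpa using (Submodule.mem_bot R).mp this |>.symm ▸ N.zero_mem
  · have := hf N; rw [iSup_neg hN] at this
    exact (Submodule.mem_bot R).mp this

/-- Sups over disjoint subfamilies of an independent family of submodules are disjoint. -/
lemma sSupIndep.disjoint_sSup_sSup {s A B : Set (Submodule R M)} (hind : sSupIndep s)
    (hA : A ⊆ s) (hB : B ⊆ s) (hAB : ∀ N, N ∈ A → N ∉ B) :
    Disjoint (sSup A) (sSup B) := by
  classical
  rw [Submodule.disjoint_def]
  intro x hxA hxB
  obtain ⟨f, hfN, hf0, hfsum⟩ := exists_finsupp_of_mem_sSup hxA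
  obtain ⟨g, hgN, hg0, hgsum⟩ := exists_finsupp_of_mem_sSup hxB
  set h : Submodule R M →₀ M := f - g with hh
  have hhN : ∀ N, h N ∈ N := fun N => by
    simpa [hh, Finsupp.sub_apply] using sub_mem (hfN N) (hgN N)
  have hhsum : (h.sum fun _ m => m) = 0 := by
    rw [hh, Finsupp.sum_sub_index (fun a b₁ b₂ => rfl), hfsum, hgsum, sub_self]
  have hzero : ∀ N, h N = 0 := by
    intro N0
    by_cases hNs : N0 ∈ s
    · by_cases hNsupp : N0 ∈ h.support
      · have hsum' : h N0 + ∑ N ∈ h.support.erase N0, h N = 0 := by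
          rw [Finset.add_sum_erase _ _ hNsupp]; exact hhsum
        have hmem : h N0 ∈ sSup (s \ {N0}) := by
          have heq : h N0 = -∑ N ∈ h.support.erase N0, h N := by
            rw [eq_neg_iff_add_eq_zero]; exact hsum'
          rw [heq]
          refine neg_mem (Submodule.sum_mem _ ?_)
          intro N hNe
          by_cases hNs' : N ∈ s
          · have hms : N ∈ s \ {N0} :=
              ⟨hNs', by simpa using Finset.ne_of_mem_erase hNe⟩
            exact le_sSup hms (hhN N)
          · have hN0 : h N = 0 := by
              simp [hh, Finsupp.sub_apply, hf0 _ (fun hm => hNs' (hA hm)),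
                hg0 _ (fun hm => hNs' (hB hm))]
            rw [hN0]; exact zero_mem _
        exact (Submodule.disjoint_def.mp (hind hNs)) _ (hhN N0) hmem
      · exact Finsupp.notMem_support_iff.mp hNsupp
    · simp [hh, Finsupp.sub_apply, hf0 _ (fun hmem => hNs (hA hmem)),
        hg0 _ (fun hmem => hNs (hB hmem))]
  have hf_eq_zero : f = 0 := by
    ext N
    by_cases hNA : N ∈ A
    · have hg' : g N = 0 := hg0 _ (hAB N hNA)
      have := hzero N
      simp only [hh, Finsupp.sub_apply, hg', sub_zero] at this
      simpa using this
    · simpa using hf0 _ hNA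
  rw [← hfsum, hf_eq_zero, Finsupp.sum_zero_index]

end Aux

section Main

variable {R : Type*} [Ring R] {M : Type*} [AddCommGroup M] [Module R M]

/-- Key recursion: a set of summands containing a "cube" of summands indexed by subsets of
`ℕ`, strictly monotone with respect to adding new indices, has no deviation. -/
lemma not_devLE (o : Ordinal.{v}) (S : Set {N : Submodule R M // IsSummand N})
    (g : Set ℕ → Submodule R M)
    (hmono : ∀ ⦃T T' : Set ℕ⦄, T ⊆ T' → g T ≤ g T')
    (hmem : ∀ T : Set ℕ, ∃ h : IsSummand (g T),
      (⟨g T, h⟩ : {N : Submodule R M // IsSummand N}) ∈ S)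
    (hstrict : ∀ (T : Set ℕ) (j : ℕ), j ∉ T → ¬ g (insert j T) ≤ g T) :
    ¬ DevLE S o := by
  induction o using Ordinal.induction generalizing S g with
  | _ o IH =>
  intro hdev
  rw [DevLE] at hdev
  set T : ℕ → Set ℕ := fun n => {m | n ≤ (Nat.unpair m).1} with hT
  have hTsub : ∀ {n n' : ℕ}, n ≤ n' → T n' ⊆ T n := fun hle m hm => le_trans hle hm
  set f : ℕ → {N : Submodule R M // IsSummand N} :=
    fun n => ⟨g (T n), (hmem (T n)).choose⟩ with hf
  obtain ⟨N, hN⟩ := hdev f (fun n => (hmem (T n)).choose_spec)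
    (fun n => hmono (hTsub (Nat.le_succ n)))
  have hpair_mem : ∀ k, Nat.pair N k ∈ T N := fun k => by
    simp [hT, Nat.unpair_pair]
  have hpair_not_mem : ∀ k, Nat.pair N k ∉ T (N + 1) := fun k h => by
    simp only [hT, Set.mem_setOf_eq, Nat.unpair_pair] at h; omega
  rcases hN N le_rfl with hdisc | ⟨o', ho', hdev'⟩
  · -- discrete case: but the interval contains two distinct comparable summands
    have hj : Nat.pair N 0 ∉ T (N + 1) := hpair_not_mem 0
    set b : {N : Submodule R M // IsSummand N} :=
      ⟨g (insert (Nat.pair N 0) (T (N + 1))), (hmem _).choose⟩ with hb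
    have hins_sub : insert (Nat.pair N 0) (T (N + 1)) ⊆ T N :=
      Set.insert_subset (hpair_mem 0) (hTsub (Nat.le_succ N))
    have hab : f (N + 1) = b := by
      refine hdisc _ ⟨(hmem _).choose_spec, le_refl _, hmono (hTsub (Nat.le_succ N))⟩
        _ ⟨(hmem _).choose_spec, hmono (Set.subset_insert _ _), hmono hins_sub⟩
        (hmono (Set.subset_insert _ _))
    have : g (insert (Nat.pair N 0) (T (N + 1))) ≤ g (T (N + 1)) := by
      have := congrArg Subtype.val hab
      simp only [hf, hb] at this
      exact this ▸ le_refl _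
    exact hstrict _ _ hj this
  · -- deviation `< o` case: recurse inside the interval
    refine IH o' ho' (S ∩ Set.Icc (f (N + 1)) (f N))
      (fun U => g (T (N + 1) ∪ (fun k => Nat.pair N k) '' U)) ?_ ?_ ?_ hdev'
    · intro U U' hUU
      exact hmono (Set.union_subset_union_right _ (Set.image_mono hUU))
    · intro U
      refine ⟨(hmem _).choose, (hmem _).choose_spec, ?_, ?_⟩
      · exact hmono Set.subset_union_left
      · refine hmono (Set.union_subset (hTsub (Nat.le_succ N)) ?_)
        rintro m ⟨k, _, rfl⟩
        exact hpair_mem k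
    · intro U j hjU
      have key : T (N + 1) ∪ (fun k => Nat.pair N k) '' insert j U =
          insert (Nat.pair N j) (T (N + 1) ∪ (fun k => Nat.pair N k) '' U) := by
        rw [Set.image_insert_eq, Set.union_insert]
      show ¬ g (T (N + 1) ∪ (fun k => Nat.pair N k) '' insert j U) ≤
          g (T (N + 1) ∪ (fun k => Nat.pair N k) '' U)
      rw [key]
      refine hstrict _ _ ?_
      rintro (h | ⟨k, hk, hpk⟩)
      · exact hpair_not_mem j h
      · have : k = j := by
          have := congrArg (fun m => (Nat.unpair m).2) hpk
          simpa [Nat.unpair_pair] using this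
        exact hjU (this ▸ hk)

end Main

/-- If the poset of direct summands of `M` (ordered by inclusion) has deviation, then every
direct sum decomposition of `M` has only finitely many nonzero summands. -/
theorem decomposition_finite_of_hasDev {R : Type*} [Ring R] {M : Type*} [AddCommGroup M]
    [Module R M]
    (hdev : ∃ o : Ordinal.{v},
      DevLE (Set.univ : Set {N : Submodule R M // IsSummand N}) o)
    (s : Set (Submodule R M)) (hind : sSupIndep s) (hsup : sSup s = ⊤) (hbot : ⊥ ∉ s) :
    s.Finite := by
  by_contra hfin
  have hs : s.Infinite := hfin
  obtain ⟨o, hdev⟩ := hdev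
  set e := hs.natEmbedding with he
  set ν : ℕ → Submodule R M := fun i => (e i : Submodule R M) with hν
  have hνs : ∀ i, ν i ∈ s := fun i => (e i).2
  have hνinj : Function.Injective ν := fun i j h => e.injective (Subtype.ext h)
  set g : Set ℕ → Submodule R M := fun T => sSup (s \ (ν '' Tᶜ)) with hg
  have himg_sub : ∀ T : Set ℕ, ν '' Tᶜ ⊆ s := by
    rintro T _ ⟨i, _, rfl⟩; exact hνs i
  refine not_devLE o Set.univ g ?_ ?_ ?_ hdev
  · intro T T' hTT
    refine sSup_le_sSup (Set.diff_subset_diff_right (Set.image_mono ?_))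
    exact Set.compl_subset_compl.mpr hTT
  · intro T
    refine ⟨⟨sSup (ν '' Tᶜ), ?_, ?_⟩, Set.mem_univ _⟩
    · exact hind.disjoint_sSup_sSup Set.diff_subset (himg_sub T)
        (fun N hN => hN.2)
    · rw [codisjoint_iff, ← sSup_union, Set.diff_union_of_subset (himg_sub T), hsup]
  · intro T j hjT
    intro hle
    have h1 : ν j ≤ g (insert j T) := by
      refine le_sSup ⟨hνs j, ?_⟩
      rintro ⟨i, hi, hij⟩
      exact hi (Set.mem_insert_iff.mpr (Or.inl (hνinj hij))) |>.elim
    have h2 : g T ≤ sSup (s \ {ν j}) := by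
      refine sSup_le_sSup ?_
      rintro K ⟨hKs, hK⟩
      refine ⟨hKs, ?_⟩
      intro hKj
      exact hK ⟨j, hjT, (Set.mem_singleton_iff.mp hKj).symm⟩
    have : ν j = ⊥ := (hind (hνs j)).eq_bot_of_le ((h1.trans hle).trans h2)
    exact hbot (this ▸ hνs j)
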